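/- arXiv:2210.06846 — 2 statements merged into one kernel-verified Lean document; each statement's English description precedes it below -/
import Mathlib

section
/- (Discretization error over a sequence) Let Q = {q₀ = 0 ≤ q₁ ≤ ⋯ ≤ qₙ = 1} be a finite grid of prices in [0,1] and let δ(Q) = max_i (qᵢ - qᵢ₋₁). Then for any finite sequence of valuation pairs (s₁,b₁),…,(s_T,b_T) ∈ [0,1]² and any price p ∈ [0,1], we have Σ_{t=1}^T GFT_t(p) ≤ 2·max_{q ∈ Q} Σ_{t=1}^T GFT_t(q) + δ(Q)·T. -/
open Finset

/-- Gain from trade when a single price `x` is posted to agents with valuations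
`s` (seller) and `b` (buyer). -/
noncomputable def GFT1 (x s b : ℝ) : ℝ := if s ≤ x ∧ x ≤ b then b - s else 0

lemma GFT1_nonneg (x s b : ℝ) : 0 ≤ GFT1 x s b := by
  unfold GFT1
  split
  · next h => linarith [h.1, h.2]
  · exact le_refl 0

/-- Discretization error over a sequence: the total gain from trade of any price
`p ∈ [0,1]` is at most twice that of the best grid price, plus `δ(Q)·T`. -/
theorem discretization_error (n T : ℕ) (q : Fin (n + 1) → ℝ)
    (hq0 : q 0 = 0) (hqn : q (Fin.last n) = 1) (hmono : Monotone q)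
    (δ : ℝ) (hδ : ∀ i : Fin n, q i.succ - q i.castSucc ≤ δ)
    (s b : ℕ → ℝ) (hsb : ∀ t, s t ∈ Set.Icc (0:ℝ) 1 ∧ b t ∈ Set.Icc (0:ℝ) 1)
    (p : ℝ) (hp : p ∈ Set.Icc (0:ℝ) 1) :
    ∑ t ∈ Finset.range T, GFT1 p (s t) (b t) ≤
      2 * (Finset.univ.sup' Finset.univ_nonempty
            fun i : Fin (n + 1) => ∑ t ∈ Finset.range T, GFT1 (q i) (s t) (b t))
        + δ * T := by
  -- notation for the sup
  set M := Finset.univ.sup' Finset.univ_nonempty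
      fun i : Fin (n + 1) => ∑ t ∈ Finset.range T, GFT1 (q i) (s t) (b t) with hM
  have hsum_le : ∀ i : Fin (n+1),
      ∑ t ∈ Finset.range T, GFT1 (q i) (s t) (b t) ≤ M := by
    intro i
    exact Finset.le_sup' (fun i => ∑ t ∈ Finset.range T, GFT1 (q i) (s t) (b t))
      (Finset.mem_univ i)
  have hMnonneg : 0 ≤ M := by
    refine le_trans ?_ (hsum_le 0)
    exact Finset.sum_nonneg fun t _ => GFT1_nonneg _ _ _
  -- n ≥ 1
  rcases n with _ | n
  · exfalso
    have : (0:ℝ) = 1 := by rw [← hq0, ← hqn]; rfl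
    norm_num at this
  have hδ0 : 0 ≤ δ := le_trans (by
    have := hmono (Fin.castSucc_le_succ (0 : Fin (n+1)))
    linarith) (hδ 0)
  have hδT : 0 ≤ δ * T := mul_nonneg hδ0 (Nat.cast_nonneg T)
  -- the set of grid points above p
  have hne : (Finset.univ.filter (fun j : Fin (n+1+1) => p ≤ q j)).Nonempty := by
    refine ⟨Fin.last (n+1), ?_⟩
    rw [Finset.mem_filter]
    exact ⟨Finset.mem_univ _, by rw [hqn]; exact hp.2⟩
  set k := (Finset.univ.filter (fun j : Fin (n+1+1) => p ≤ q j)).min' hne with hk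
  have hkmem := Finset.min'_mem _ hne
  have hpk : p ≤ q k := by
    have := hkmem
    rw [← hk] at this
    simpa using (Finset.mem_filter.mp this).2
  by_cases hk0 : k = 0
  · -- p ≤ q 0 = 0 and 0 ≤ p, so p = q 0
    have hp0 : p = q 0 := le_antisymm (by rw [← hk0]; exact hpk) (hq0 ▸ hp.1)
    calc ∑ t ∈ Finset.range T, GFT1 p (s t) (b t)
        = ∑ t ∈ Finset.range T, GFT1 (q 0) (s t) (b t) := by rw [hp0]
      _ ≤ M := hsum_le 0
      _ ≤ 2 * M + δ * T := by linarith
  · -- k = i.succ for i := k.pred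
    set i : Fin (n+1) := k.pred hk0 with hi
    have hks : k = i.succ := (Fin.succ_pred k hk0).symm
    have hlow : q i.castSucc ≤ p := by
      by_contra hcon
      push_neg at hcon
      have hmem : i.castSucc ∈ Finset.univ.filter (fun j : Fin (n+1+1) => p ≤ q j) := by
        simp [le_of_lt hcon]
      have := Finset.min'_le _ _ hmem
      rw [← hk, hks] at this
      exact absurd this (not_le.mpr (Fin.castSucc_lt_succ (i := i)))
    have hhigh : p ≤ q i.succ := by rw [← hks]; exact hpk
    -- pointwise bound
    have hpt : ∀ t, GFT1 p (s t) (b t) ≤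
        GFT1 (q i.castSucc) (s t) (b t) + GFT1 (q i.succ) (s t) (b t) + δ := by
      intro t
      have h1 := GFT1_nonneg (q i.castSucc) (s t) (b t)
      have h2 := GFT1_nonneg (q i.succ) (s t) (b t)
      unfold GFT1
      by_cases htr : s t ≤ p ∧ p ≤ b t
      · rw [if_pos htr]
        by_cases hsl : s t ≤ q i.castSucc
        · have : GFT1 (q i.castSucc) (s t) (b t) = b t - s t := by
            unfold GFT1; rw [if_pos ⟨hsl, le_trans hlow htr.2⟩]
          unfold GFT1 at this h2
          rw [this] at *
          linarith
        · push_neg at hsl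
          by_cases hbu : q i.succ ≤ b t
          · have : GFT1 (q i.succ) (s t) (b t) = b t - s t := by
              unfold GFT1; rw [if_pos ⟨le_trans htr.1 hhigh, hbu⟩]
            unfold GFT1 at this h1
            rw [this] at *
            linarith
          · push_neg at hbu
            have : b t - s t ≤ δ := le_trans (by linarith) (hδ i)
            unfold GFT1 at h1 h2
            linarith
      · rw [if_neg htr]
        unfold GFT1 at h1 h2
        linarith
    calc ∑ t ∈ Finset.range T, GFT1 p (s t) (b t)
        ≤ ∑ t ∈ Finset.range T, (GFT1 (q i.castSucc) (s t) (b t)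
            + GFT1 (q i.succ) (s t) (b t) + δ) :=
          Finset.sum_le_sum fun t _ => hpt t
      _ = (∑ t ∈ Finset.range T, GFT1 (q i.castSucc) (s t) (b t))
            + (∑ t ∈ Finset.range T, GFT1 (q i.succ) (s t) (b t)) + δ * T := by
          simp [Finset.sum_add_distrib, mul_comm]
      _ ≤ M + M + δ * T := by
          have := hsum_le i.castSucc
          have := hsum_le i.succ
          linarith
      _ = 2 * M + δ * T := by ring
end

section
/- (Mixture expected GFT upper bound for single-price learner) In the randomized instance where i is uniform in {0,…,1/Δ - 1} and then (s,b) is uniform in S_i, any single price p not a multiple of δ yields expected gain from trade δ(Δ² + δ - Δδ) ≤ δ(Δ² + δ). -/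
open Finset

/-- Expected GFT of price `p` under the uniform distribution on `S_i`. -/
noncomputable def expGFT (K m : ℕ) (Δ δ : ℝ) (i : ℕ) (p : ℝ) : ℝ :=
  (GFT1 p ((i : ℝ) * Δ) (((i : ℝ) + 1) * Δ)
      + ∑ j ∈ Finset.range K \ {i}, ∑ k ∈ Finset.range m,
          GFT1 p ((j : ℝ) * Δ + (k : ℝ) * δ) ((j : ℝ) * Δ + ((k : ℝ) + 1) * δ)
      + ∑ k ∈ Finset.Icc 1 (m - 1),
          GFT1 p ((i : ℝ) * Δ + (k : ℝ) * δ) ((i : ℝ) * Δ + (k : ℝ) * δ))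
    / ((K : ℝ) * m)

/-- Mixture expected GFT upper bound: with `i` uniform among `{0,…,K-1}`, any
single price `p ∈ (0,1)` not a multiple of `δ` yields expected gain from trade
exactly `δ(Δ² + δ - Δδ) ≤ δ(Δ² + δ)`. -/
theorem mixture_expected_gft (K m : ℕ) (hK : 0 < K) (hm : 0 < m)
    (Δ δ : ℝ) (hΔ : Δ = 1 / (K : ℝ)) (hδ : δ = 1 / ((K : ℝ) * m))
    (p : ℝ) (hp0 : 0 < p) (hp1 : p < 1)
    (hgrid : ∀ k : ℕ, p ≠ (k : ℝ) * δ) :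
    (1 / (K : ℝ)) * ∑ i ∈ Finset.range K, expGFT K m Δ δ i p
        = δ * (Δ ^ 2 + δ - Δ * δ) ∧
      (1 / (K : ℝ)) * ∑ i ∈ Finset.range K, expGFT K m Δ δ i p
        ≤ δ * (Δ ^ 2 + δ) := by
  have hK' : (0:ℝ) < K := by exact_mod_cast hK
  have hm' : (0:ℝ) < m := by exact_mod_cast hm
  have hKm : (0:ℝ) < (K:ℝ) * m := mul_pos hK' hm'
  have hδpos : 0 < δ := by rw [hδ]; positivity
  have hΔpos : 0 < Δ := by rw [hΔ]; positivity
  have hΔδ : Δ = (m:ℝ) * δ := by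
    rw [hΔ, hδ]; field_simp
  set n : ℕ := ⌊p / δ⌋₊ with hn
  have h1 : (n:ℝ) * δ < p := by
    have hle : (n:ℝ) ≤ p / δ := Nat.floor_le (by positivity)
    have hle' : (n:ℝ) * δ ≤ p := by
      rw [← le_div_iff₀ hδpos]; exact hle
    exact hle'.lt_of_ne fun h => hgrid n h.symm
  have h2 : p < ((n:ℝ) + 1) * δ := by
    have := Nat.lt_floor_add_one (p / δ)
    rw [div_lt_iff₀ hδpos] at this
    exact_mod_cast this
  have hnKm : n < K * m := by
    have hone : ((K * m : ℕ):ℝ) * δ = 1 := by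
      push_cast; rw [hδ]; field_simp
    have : (n:ℝ) * δ < ((K * m : ℕ):ℝ) * δ := by
      calc (n:ℝ) * δ < p := h1
        _ < 1 := hp1
        _ = ((K * m : ℕ):ℝ) * δ := hone.symm
    have := lt_of_mul_lt_mul_right this hδpos.le
    exact_mod_cast this
  -- key computation of GFT1 at grid endpoints
  have key : ∀ a b : ℕ, GFT1 p ((a:ℝ) * δ) ((b:ℝ) * δ)
      = if a ≤ n ∧ n < b then ((b:ℝ) - (a:ℝ)) * δ else 0 := by
    intro a b
    unfold GFT1
    by_cases h : a ≤ n ∧ n < b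
    · rw [if_pos h, if_pos]
      · ring
      constructor
      · calc (a:ℝ) * δ ≤ (n:ℝ) * δ := by
              apply mul_le_mul_of_nonneg_right _ hδpos.le
              exact_mod_cast h.1
          _ ≤ p := h1.le
      · calc p ≤ ((n:ℝ) + 1) * δ := h2.le
          _ ≤ (b:ℝ) * δ := by
              apply mul_le_mul_of_nonneg_right _ hδpos.le
              have : (n + 1 : ℕ) ≤ b := h.2
              exact_mod_cast this
    · rw [if_neg h, if_neg]
      rintro ⟨hs, hb⟩
      apply h
      constructor
      · by_contra hc
        push_neg at hc
        have : ((n:ℝ) + 1) * δ ≤ (a:ℝ) * δ := by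
          apply mul_le_mul_of_nonneg_right _ hδpos.le
          have : (n + 1 : ℕ) ≤ a := hc
          exact_mod_cast this
        linarith
      · by_contra hc
        push_neg at hc
        have : (b:ℝ) * δ ≤ (n:ℝ) * δ := by
          apply mul_le_mul_of_nonneg_right _ hδpos.le
          exact_mod_cast hc
        linarith
  have hcond : ∀ i : ℕ, (i * m ≤ n ∧ n < (i + 1) * m) ↔ i = n / m := by
    intro i
    constructor
    · rintro ⟨hl, hr⟩
      exact (Nat.div_eq_of_lt_le hl hr).symm
    · rintro rfl
      refine ⟨Nat.div_mul_le_self n m, ?_⟩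
      have E := Nat.div_add_mod n m
      have hlt := Nat.mod_lt n hm
      have h2 : (n / m + 1) * m = m * (n / m) + m := by ring
      omega
  set q := n / m with hq
  have hqK : q < K := Nat.div_lt_of_lt_mul (by rwa [mul_comm] at hnKm)
  have hexp : ∀ i : ℕ, expGFT K m Δ δ i p
      = ((if i = q then Δ else 0) + (if i = q then 0 else δ)) / ((K:ℝ) * m) := by
    intro i
    unfold expGFT
    congr 1
    have part1 : GFT1 p ((i:ℝ) * Δ) (((i:ℝ) + 1) * Δ) = if i = q then Δ else 0 := by
      have e1 : (i:ℝ) * Δ = ((i * m : ℕ):ℝ) * δ := by push_cast [hΔδ]; ring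
      have e2 : ((i:ℝ) + 1) * Δ = (((i + 1) * m : ℕ):ℝ) * δ := by push_cast [hΔδ]; ring
      rw [e1, e2, key]
      by_cases h : i = q
      · rw [if_pos ((hcond i).mpr h), if_pos h]
        push_cast [hΔδ]; ring
      · rw [if_neg (fun hc => h ((hcond i).mp hc)), if_neg h]
    have part2 : (∑ j ∈ Finset.range K \ {i}, ∑ k ∈ Finset.range m,
          GFT1 p ((j:ℝ) * Δ + (k:ℝ) * δ) ((j:ℝ) * Δ + ((k:ℝ) + 1) * δ))
        = if i = q then 0 else δ := by
      have inner : ∀ j : ℕ, (∑ k ∈ Finset.range m,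
            GFT1 p ((j:ℝ) * Δ + (k:ℝ) * δ) ((j:ℝ) * Δ + ((k:ℝ) + 1) * δ))
          = if j = q then δ else 0 := by
        intro j
        have term : ∀ k : ℕ, GFT1 p ((j:ℝ) * Δ + (k:ℝ) * δ) ((j:ℝ) * Δ + ((k:ℝ) + 1) * δ)
            = if j * m + k = n then δ else 0 := by
          intro k
          have e1 : (j:ℝ) * Δ + (k:ℝ) * δ = ((j * m + k : ℕ):ℝ) * δ := by
            push_cast [hΔδ]; ring
          have e2 : (j:ℝ) * Δ + ((k:ℝ) + 1) * δ = ((j * m + k + 1 : ℕ):ℝ) * δ := by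
            push_cast [hΔδ]; ring
          rw [e1, e2, key]
          by_cases h : j * m + k = n
          · rw [if_pos (by omega), if_pos h]
            push_cast; ring
          · rw [if_neg (by omega), if_neg h]
        rw [Finset.sum_congr rfl (fun k _ => term k)]
        by_cases hj : j = q
        · subst hj
          have E : q * m + n % m = n := by
            rw [hq]; exact Nat.div_add_mod' n m
          have hkeq : ∀ k : ℕ, (q * m + k = n) ↔ k = n % m := by
            intro k; omega
          rw [if_pos rfl]
          calc (∑ k ∈ Finset.range m, if q * m + k = n then δ else 0)
              = ∑ k ∈ Finset.range m, if k = n % m then δ else 0 := by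
                apply Finset.sum_congr rfl
                intro k _
                simp only [hkeq k]
            _ = δ := by
                rw [Finset.sum_ite_eq' (Finset.range m) (n % m) (fun _ => δ),
                  if_pos (Finset.mem_range.mpr (Nat.mod_lt n hm))]
        · rw [if_neg hj]
          apply Finset.sum_eq_zero
          intro k hk
          rw [if_neg]
          intro hc
          apply hj
          apply (hcond j).mp
          have hkm : k < m := Finset.mem_range.mp hk
          have h2 : (j + 1) * m = j * m + m := by ring
          omega
      rw [Finset.sum_congr rfl (fun j _ => inner j)]
      rw [Finset.sum_ite_eq' (Finset.range K \ {i}) q (fun _ => δ)]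
      by_cases h : i = q
      · rw [if_neg, if_pos h]
        subst h
        simp
      · rw [if_pos, if_neg h]
        simp only [Finset.mem_sdiff, Finset.mem_range, Finset.mem_singleton]
        exact ⟨hqK, fun hc => h hc.symm⟩
    have part3 : (∑ k ∈ Finset.Icc 1 (m - 1),
          GFT1 p ((i:ℝ) * Δ + (k:ℝ) * δ) ((i:ℝ) * Δ + (k:ℝ) * δ)) = 0 := by
      apply Finset.sum_eq_zero
      intro k _
      unfold GFT1
      split <;> ring
    rw [part1, part2, part3, add_zero]
  have hsum : (∑ i ∈ Finset.range K, expGFT K m Δ δ i p)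
      = (Δ + ((K:ℝ) - 1) * δ) / ((K:ℝ) * m) := by
    rw [Finset.sum_congr rfl (fun i _ => hexp i), ← Finset.sum_div]
    congr 1
    rw [Finset.sum_add_distrib]
    have e1 : (∑ i ∈ Finset.range K, if i = q then Δ else 0) = Δ := by
      rw [Finset.sum_ite_eq' (Finset.range K) q (fun _ => Δ),
        if_pos (Finset.mem_range.mpr hqK)]
    have e2 : (∑ i ∈ Finset.range K, if i = q then 0 else δ) = ((K:ℝ) - 1) * δ := by
      have : ∀ i : ℕ, (if i = q then (0:ℝ) else δ) = δ - (if i = q then δ else 0) := by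
        intro i; split <;> ring
      rw [Finset.sum_congr rfl (fun i _ => this i), Finset.sum_sub_distrib,
        Finset.sum_const, Finset.card_range,
        Finset.sum_ite_eq' (Finset.range K) q (fun _ => δ),
        if_pos (Finset.mem_range.mpr hqK)]
      simp [mul_comm]
      ring
    rw [e1, e2]
  have heq : (1 / (K : ℝ)) * ∑ i ∈ Finset.range K, expGFT K m Δ δ i p
      = δ * (Δ ^ 2 + δ - Δ * δ) := by
    rw [hsum, hΔ, hδ]
    field_simp
    ring
  refine ⟨heq, ?_⟩
  rw [heq]
  have : 0 ≤ δ * (Δ * δ) := by positivity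
  nlinarith
end
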